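/- Let C be the b-targeting Schur choice rule for a strict priority ranking P on a finite student set, and let C' be any choice rule with |C'(S)| ≤ q. If C(S) ≠ C'(S) for some S, then either |C(S)| > |C'(S)|, or T_b(ξ(C'(S))) strictly majorizes T_b(ξ(C(S))), or C(S) P-priority dominates C'(S). -/

import Mathlib

open Finset

/-- `x` majorizes `y`: for each `k`, the sum of the `k` largest coordinates of `x`
is at least that of `y`, and the total sums agree.  (Stated via the equivalent
subset formulation.) -/
def maj {n : ℕ} (x y : Fin n → ℝ) : Prop :=
  (∀ B : Finset (Fin n), ∃ A : Finset (Fin n),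
      A.card = B.card ∧ ∑ i ∈ B, y i ≤ ∑ i ∈ A, x i) ∧
  ∑ i, x i = ∑ i, y i

/-- strict majorization -/
def smaj {n : ℕ} (x y : Fin n → ℝ) : Prop := maj x y ∧ ¬ maj y x

/-- The biased transformation `T_b(x) = x + (Σ_i x_i)·b`. -/
noncomputable def Tb {n : ℕ} (b : Fin n → ℝ) (x : Fin n → ℤ) : Fin n → ℝ :=
  fun i => (x i : ℝ) + (∑ j, (x j : ℝ)) * b i

/-- The budget set `B(x)` for capacity `q`. -/
def memB {n : ℕ} (q : ℕ) (x y : Fin n → ℤ) : Prop :=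
  (∀ i, 0 ≤ y i) ∧ (∀ i, y i ≤ x i) ∧ ∑ i, y i ≤ (q : ℤ)

/-- The `b`-targeting Schur frontier `F_b(x)`. -/
def memF {n : ℕ} (q : ℕ) (b : Fin n → ℝ) (x y : Fin n → ℤ) : Prop :=
  memB q x y ∧
    ¬ ∃ z : Fin n → ℤ, memB q x z ∧ ((y ≤ z ∧ y ≠ z) ∨ smaj (Tb b y) (Tb b z))


/-- The type-count vector of a finite set of typed students. -/
def xi {σ : Type} [DecidableEq σ] {n : ℕ} (typ : σ → Fin n) (R : Finset σ) :
    Fin n → ℤ :=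
  fun i => ((R.filter fun s => typ s = i).card : ℤ)


open scoped Classical in
/-- The `b`-targeting Schur (greedy) choice rule: process the listed students in
order, admitting a student whenever the resulting type counts stay below some
frontier distribution of `ξ(S)`. -/
noncomputable def schurChoice {σ : Type} [DecidableEq σ] {n : ℕ}
    (q : ℕ) (b : Fin n → ℝ) (typ : σ → Fin n) (S : Finset σ) :
    List σ → Finset σ → Finset σ
  | [], acc => acc
  | s :: rest, acc =>
      if ∃ x : Fin n → ℤ, memF q b (xi typ S) x ∧
          ∀ i, xi typ (insert s acc) i ≤ x i then
        schurChoice q b typ S rest (insert s acc)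
      else schurChoice q b typ S rest acc

/-- `A` P-priority dominates `A'` (lower `prio` value = higher priority):
`A` is at least as large, and coordinatewise its sorted priority values
are at least as high (i.e. numerically at most) those of `A'`. -/
def pdom {σ : Type} [DecidableEq σ] (prio : σ → ℕ) (A A' : Finset σ) : Prop :=
  A'.card ≤ A.card ∧ ∀ k, k < A'.card →
    (Finset.sort (A.image prio) (· ≤ ·)).getD k 0 ≤
      (Finset.sort (A'.image prio) (· ≤ ·)).getD k 0

section MajLemmas
variable {n : ℕ}

lemma maj_refl (x : Fin n → ℝ) : maj x x :=
  ⟨fun B => ⟨B, rfl, le_refl _⟩, rfl⟩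

lemma maj_trans {x y z : Fin n → ℝ} (h1 : maj x y) (h2 : maj y z) : maj x z := by
  refine ⟨fun B => ?_, h1.2.trans h2.2⟩
  obtain ⟨A1, hA1c, hA1⟩ := h2.1 B
  obtain ⟨A2, hA2c, hA2⟩ := h1.1 A1
  exact ⟨A2, hA2c.trans hA1c, hA1.trans hA2⟩

lemma maj_sum_eq {x y : Fin n → ℝ} (h : maj x y) : ∑ i, x i = ∑ i, y i := h.2

lemma sum_le_sum_of_threshold (f : Fin n → ℝ) (A D : Finset (Fin n))
    (hcard : A.card = D.card) (c : ℝ)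
    (hA : ∀ a ∈ A, a ∉ D → f a ≤ c) (hD : ∀ d ∈ D, d ∉ A → c ≤ f d) :
    ∑ i ∈ A, f i ≤ ∑ i ∈ D, f i := by
  have hAD : (A \ D).card = (D \ A).card := by
    have h1 : (A \ D).card + (A ∩ D).card = A.card := Finset.card_sdiff_add_card_inter A D
    have h2 : (D \ A).card + (D ∩ A).card = D.card := Finset.card_sdiff_add_card_inter D A
    have : (A ∩ D).card = (D ∩ A).card := by rw [Finset.inter_comm]
    omega
  have h1 : ∑ i ∈ A \ D, f i ≤ (A \ D).card • c := by
    apply Finset.sum_le_card_nsmul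
    intro x hx
    exact hA x (Finset.mem_sdiff.mp hx).1 (Finset.mem_sdiff.mp hx).2
  have h2 : (D \ A).card • c ≤ ∑ i ∈ D \ A, f i := by
    apply Finset.card_nsmul_le_sum
    intro x hx
    exact hD x (Finset.mem_sdiff.mp hx).1 (Finset.mem_sdiff.mp hx).2
  have e1 : ∑ i ∈ A ∩ D, f i + ∑ i ∈ A \ D, f i = ∑ i ∈ A, f i :=
    Finset.sum_inter_add_sum_sdiff A D f
  have e2 : ∑ i ∈ D ∩ A, f i + ∑ i ∈ D \ A, f i = ∑ i ∈ D, f i :=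
    Finset.sum_inter_add_sum_sdiff D A f
  have e3 : ∑ i ∈ A ∩ D, f i = ∑ i ∈ D ∩ A, f i := by rw [Finset.inter_comm]
  rw [hAD] at h1
  linarith [h1.trans h2]

lemma sum_split_two {i j : Fin n} (hij : i ≠ j) (s : Finset (Fin n))
    (hi : i ∈ s) (hj : j ∈ s) (v : Fin n → ℝ) :
    ∑ l ∈ s, v l = v i + (v j + ∑ l ∈ (s.erase i).erase j, v l) := by
  rw [Finset.add_sum_erase _ v (Finset.mem_erase.mpr ⟨Ne.symm hij, hj⟩ : j ∈ s.erase i)]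
  · rw [Finset.add_sum_erase _ v hi]

lemma sum_congr_outside {w w' : Fin n → ℝ} {i j : Fin n} (s : Finset (Fin n))
    (hi : i ∉ s) (hj : j ∉ s) (hother : ∀ l, l ≠ i → l ≠ j → w' l = w l) :
    ∑ l ∈ s, w' l = ∑ l ∈ s, w l := by
  apply Finset.sum_congr rfl
  intro l hl
  exact hother l (fun h => hi (h ▸ hl)) (fun h => hj (h ▸ hl))

lemma transfer_total {w w' : Fin n → ℝ} {i j : Fin n} (hij : i ≠ j)
    (hsum : w' i + w' j = w i + w j)
    (hother : ∀ l, l ≠ i → l ≠ j → w' l = w l) :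
    ∑ l, w' l = ∑ l, w l := by
  rw [sum_split_two hij Finset.univ (Finset.mem_univ i) (Finset.mem_univ j) w',
      sum_split_two hij Finset.univ (Finset.mem_univ i) (Finset.mem_univ j) w,
      sum_congr_outside _ (fun h => (Finset.mem_erase.mp (Finset.mem_erase.mp h).2).1 rfl)
        (fun h => (Finset.mem_erase.mp h).1 rfl) hother]
  linarith

/-- transfer one unit from a high coordinate `i` to a low coordinate `j`:
the old vector majorizes the new one. -/
lemma maj_transfer {w w' : Fin n → ℝ} {i j : Fin n} (hij : i ≠ j)
    (hi : w' i = w i - 1) (hj : w' j = w j + 1)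
    (hother : ∀ l, l ≠ i → l ≠ j → w' l = w l)
    (hge : w j + 1 ≤ w i) : maj w w' := by
  constructor
  · intro B
    by_cases hiB : i ∈ B <;> by_cases hjB : j ∈ B
    · refine ⟨B, rfl, le_of_eq ?_⟩
      rw [sum_split_two hij B hiB hjB w', sum_split_two hij B hiB hjB w,
        sum_congr_outside _ (fun h => (Finset.mem_erase.mp (Finset.mem_erase.mp h).2).1 rfl)
          (fun h => (Finset.mem_erase.mp h).1 rfl) hother, hi, hj]
      ring
    · refine ⟨B, rfl, ?_⟩
      rw [← Finset.add_sum_erase _ w' hiB, ← Finset.add_sum_erase _ w hiB,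
        sum_congr_outside _ (fun h => (Finset.mem_erase.mp h).1 rfl)
          (fun h => hjB (Finset.erase_subset _ _ h)) hother, hi]
      linarith
    · refine ⟨insert i (B.erase j), ?_, ?_⟩
      · rw [Finset.card_insert_of_notMem (fun h => hiB (Finset.erase_subset _ _ h)),
          Finset.card_erase_of_mem hjB]
        have : 0 < B.card := Finset.card_pos.mpr ⟨j, hjB⟩
        omega
      · rw [Finset.sum_insert (fun h => hiB (Finset.erase_subset _ _ h)),
          ← Finset.add_sum_erase _ w' hjB,
          sum_congr_outside _ (fun h => hiB (Finset.erase_subset _ _ h))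
            (fun h => (Finset.mem_erase.mp h).1 rfl) hother, hj]
        linarith
    · refine ⟨B, rfl, le_of_eq ?_⟩
      exact sum_congr_outside _ hiB hjB hother
  · exact (transfer_total hij (by rw [hi, hj]; ring) hother).symm

/-- swapping two coordinates preserves majorization (both ways). -/
lemma maj_swap {w w' : Fin n → ℝ} {i j : Fin n} (hij : i ≠ j)
    (hi : w' i = w j) (hj : w' j = w i)
    (hother : ∀ l, l ≠ i → l ≠ j → w' l = w l) : maj w w' := by
  constructor
  · intro B
    by_cases hiB : i ∈ B <;> by_cases hjB : j ∈ B
    · refine ⟨B, rfl, le_of_eq ?_⟩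
      rw [sum_split_two hij B hiB hjB w', sum_split_two hij B hiB hjB w,
        sum_congr_outside _ (fun h => (Finset.mem_erase.mp (Finset.mem_erase.mp h).2).1 rfl)
          (fun h => (Finset.mem_erase.mp h).1 rfl) hother, hi, hj]
      ring
    · refine ⟨insert j (B.erase i), ?_, le_of_eq ?_⟩
      · rw [Finset.card_insert_of_notMem (fun h => hjB (Finset.erase_subset _ _ h)),
          Finset.card_erase_of_mem hiB]
        have : 0 < B.card := Finset.card_pos.mpr ⟨i, hiB⟩
        omega
      · rw [Finset.sum_insert (fun h => hjB (Finset.erase_subset _ _ h)),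
          ← Finset.add_sum_erase _ w' hiB,
          sum_congr_outside _ (fun h => (Finset.mem_erase.mp h).1 rfl)
            (fun h => hjB (Finset.erase_subset _ _ h)) hother, hi]
    · refine ⟨insert i (B.erase j), ?_, le_of_eq ?_⟩
      · rw [Finset.card_insert_of_notMem (fun h => hiB (Finset.erase_subset _ _ h)),
          Finset.card_erase_of_mem hjB]
        have : 0 < B.card := Finset.card_pos.mpr ⟨j, hjB⟩
        omega
      · rw [Finset.sum_insert (fun h => hiB (Finset.erase_subset _ _ h)),
          ← Finset.add_sum_erase _ w' hjB,
          sum_congr_outside _ (fun h => hiB (Finset.erase_subset _ _ h))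
            (fun h => (Finset.mem_erase.mp h).1 rfl) hother, hj]
    · exact ⟨B, rfl, le_of_eq (sum_congr_outside _ hiB hjB hother)⟩
  · exact (transfer_total hij (by rw [hi, hj]; ring) hother).symm

/-- transferring a unit from low `i` to high `j` (gap `> 1`) : the new vector
does not majorize the old one. -/
lemma not_maj_transfer {w w' : Fin n → ℝ} {i j : Fin n} (hij : i ≠ j)
    (hi : w' i = w i + 1) (hj : w' j = w j - 1)
    (hother : ∀ l, l ≠ i → l ≠ j → w' l = w l)
    (hgt : w i + 1 < w j) : ¬ maj w' w := by
  intro hmaj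
  classical
  set B : Finset (Fin n) := Finset.univ.filter (fun l => w j ≤ w l) with hB
  have hjB : j ∈ B := by simp [hB]
  have hiB : i ∉ B := by simp only [hB, Finset.mem_filter, not_and]; intro _; push_neg; linarith
  obtain ⟨A, hAc, hle⟩ := hmaj.1 B
  -- coordinates where w' is ≥ w j are exactly B.erase j
  have hK : ∀ l, w j ≤ w' l ↔ l ∈ B.erase j := by
    intro l
    rcases eq_or_ne l i with rfl | hli
    · simp only [hi, Finset.mem_erase]
      constructor
      · intro h; linarith
      · intro h; exact absurd h.2 hiB
    rcases eq_or_ne l j with rfl | hlj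
    · simp only [hj, Finset.mem_erase]
      constructor
      · intro h; linarith
      · intro h; exact absurd rfl h.1
    · rw [hother l hli hlj]
      simp [hB, Finset.mem_erase, hlj]
  -- A must contain an element with w' value < w j
  have hcardK : (B.erase j).card < A.card := by
    rw [hAc, Finset.card_erase_of_mem hjB]
    have : 0 < B.card := Finset.card_pos.mpr ⟨j, hjB⟩
    omega
  have : ¬ A ⊆ B.erase j := fun h => absurd (Finset.card_le_card h) (not_le.mpr hcardK)
  obtain ⟨l₀, hl₀A, hl₀K⟩ := Finset.not_subset.mp this
  have hl₀ : w' l₀ < w j := by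
    by_contra h
    exact hl₀K ((hK l₀).mp (not_lt.mp h))
  have hbound : ∑ l ∈ A.erase l₀, w' l ≤ ∑ l ∈ B.erase j, w' l := by
    refine sum_le_sum_of_threshold w' _ _ ?_ (w j) ?_ ?_
    · rw [Finset.card_erase_of_mem hl₀A, Finset.card_erase_of_mem hjB, hAc]
    · intro a _ ha
      by_contra h
      exact ha ((hK a).mp (le_of_lt (not_le.mp h)))
    · intro d hd _
      exact ((hK d).mpr hd)
  have heq : ∑ l ∈ B.erase j, w' l = ∑ l ∈ B.erase j, w l := by
    apply sum_congr_outside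
    · intro h; exact hiB (Finset.erase_subset _ _ h)
    · intro h; exact (Finset.mem_erase.mp h).1 rfl
    · exact hother
  have h1 : ∑ l ∈ A, w' l < ∑ l ∈ B, w l := by
    rw [← Finset.add_sum_erase _ w' hl₀A, ← Finset.add_sum_erase _ w hjB]
    have := hbound.trans (le_of_eq heq)
    linarith
  linarith

lemma smaj_transfer {w w' : Fin n → ℝ} {i j : Fin n} (hij : i ≠ j)
    (hi : w' i = w i + 1) (hj : w' j = w j - 1)
    (hother : ∀ l, l ≠ i → l ≠ j → w' l = w l)
    (hgt : w i + 1 < w j) : smaj w w' := by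
  refine ⟨maj_transfer (Ne.symm hij) hj hi (fun l h1 h2 => hother l h2 h1) (by linarith), ?_⟩
  exact not_maj_transfer hij hi hj hother hgt

end MajLemmas

section Vec
variable {n : ℕ} (q : ℕ) (b : Fin n → ℝ) (cap : Fin n → ℤ)

/-- the common size of all frontier points -/
def mcap : ℤ := min (q : ℤ) (∑ i, cap i)

/-- `Tb` for vectors of total `mcap` -/
noncomputable def Tm (u : Fin n → ℤ) : Fin n → ℝ :=
  fun i => (u i : ℝ) + (mcap q cap : ℝ) * b i

/-- local stability: no profitable unit swap -/
def stable (u : Fin n → ℤ) : Prop :=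
  memB q cap u ∧ (∑ i, u i = mcap q cap) ∧
  ∀ i j, 0 < u j → u i < cap i → Tm q b cap u j ≤ Tm q b cap u i + 1

variable {q b cap}

lemma tb_eq {u : Fin n → ℤ} (h : ∑ i, u i = mcap q cap) : Tb b u = Tm q b cap u := by
  funext i
  simp only [Tb, Tm]
  congr 1
  rw [← h]
  push_cast
  ring_nf

lemma sum_tb (hb : ∑ i, b i = 0) (u : Fin n → ℤ) :
    ∑ i, Tb b u i = ∑ i, (u i : ℝ) := by
  simp only [Tb]
  rw [Finset.sum_add_distrib, ← Finset.mul_sum, hb]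
  ring

lemma maj_sum_int (hb : ∑ i, b i = 0) {u z : Fin n → ℤ}
    (h : maj (Tb b u) (Tb b z)) : ∑ i, u i = ∑ i, z i := by
  have := h.2
  rw [sum_tb hb, sum_tb hb] at this
  exact_mod_cast this

lemma sum_update_add (u : Fin n → ℤ) (i : Fin n) (c : ℤ) :
    ∑ l, Function.update u i c l = ∑ l, u l + (c - u i) := by
  rw [Finset.sum_update_of_mem (Finset.mem_univ i)]
  rw [show (Finset.univ \ {i} : Finset (Fin n)) = Finset.univ.erase i by
    rw [Finset.erase_eq]]
  rw [← Finset.add_sum_erase _ u (Finset.mem_univ i)]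
  ring

/-- move a unit from coordinate `j` to coordinate `i` -/
def move (u : Fin n → ℤ) (i j : Fin n) : Fin n → ℤ :=
  Function.update (Function.update u j (u j - 1)) i (u i + 1)

lemma move_apply_i {u : Fin n → ℤ} {i j : Fin n} : move u i j i = u i + 1 := by
  simp [move]

lemma move_apply_j {u : Fin n → ℤ} {i j : Fin n} (hij : i ≠ j) : move u i j j = u j - 1 := by
  simp [move, Function.update_of_ne (Ne.symm hij)]

lemma move_apply_other {u : Fin n → ℤ} {i j l : Fin n} (hli : l ≠ i) (hlj : l ≠ j) :
    move u i j l = u l := by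
  simp [move, Function.update_of_ne hli, Function.update_of_ne hlj]

lemma move_sum {u : Fin n → ℤ} {i j : Fin n} (hij : i ≠ j) :
    ∑ l, move u i j l = ∑ l, u l := by
  unfold move
  rw [sum_update_add, sum_update_add]
  rw [Function.update_of_ne hij]
  ring

lemma tm_move_i {u : Fin n → ℤ} {i j : Fin n} :
    Tm q b cap (move u i j) i = Tm q b cap u i + 1 := by
  simp [Tm, move_apply_i]; push_cast; ring

lemma tm_move_j {u : Fin n → ℤ} {i j : Fin n} (hij : i ≠ j) :
    Tm q b cap (move u i j) j = Tm q b cap u j - 1 := by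
  simp [Tm, move_apply_j hij]; push_cast; ring

lemma tm_move_other {u : Fin n → ℤ} {i j l : Fin n} (hli : l ≠ i) (hlj : l ≠ j) :
    Tm q b cap (move u i j) l = Tm q b cap u l := by
  simp [Tm, move_apply_other hli hlj]

lemma move_memB {u : Fin n → ℤ} (hB : memB q cap u) {i j : Fin n} (hij : i ≠ j)
    (hi : u i < cap i) (hj : 0 < u j) : memB q cap (move u i j) := by
  refine ⟨?_, ?_, ?_⟩
  · intro l
    rcases eq_or_ne l i with rfl | h1
    · rw [move_apply_i]; linarith [hB.1 l]
    rcases eq_or_ne l j with rfl | h2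
    · rw [move_apply_j hij]; omega
    · rw [move_apply_other h1 h2]; exact hB.1 l
  · intro l
    rcases eq_or_ne l i with rfl | h1
    · rw [move_apply_i]; omega
    rcases eq_or_ne l j with rfl | h2
    · rw [move_apply_j hij]; linarith [hB.2.1 l]
    · rw [move_apply_other h1 h2]; exact hB.2.1 l
  · rw [move_sum hij]; exact hB.2.2

/-- every frontier point has total `mcap` -/
lemma memF_sum {u : Fin n → ℤ} (hF : memF q b cap u) : ∑ i, u i = mcap q cap := by
  have h1 : ∑ i, u i ≤ (q : ℤ) := hF.1.2.2
  have h2 : ∑ i, u i ≤ ∑ i, cap i := Finset.sum_le_sum (fun i _ => hF.1.2.1 i)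
  rcases lt_or_ge (∑ i, u i) (mcap q cap) with hlt | hge
  · exfalso
    have hq : ∑ i, u i < (q : ℤ) := lt_of_lt_of_le hlt (min_le_left _ _)
    have hc : ∑ i, u i < ∑ i, cap i := lt_of_lt_of_le hlt (min_le_right _ _)
    have : ∃ i, u i < cap i := by
      by_contra h
      push_neg at h
      exact absurd (Finset.sum_le_sum (fun i _ => h i)) (not_le.mpr hc)
    obtain ⟨i, hi⟩ := this
    refine hF.2 ⟨Function.update u i (u i + 1), ⟨?_, ?_, ?_⟩, Or.inl ⟨?_, ?_⟩⟩
    · intro l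
      rcases eq_or_ne l i with rfl | h
      · rw [Function.update_self]; linarith [hF.1.1 l]
      · rw [Function.update_of_ne h]; exact hF.1.1 l
    · intro l
      rcases eq_or_ne l i with rfl | h
      · rw [Function.update_self]; omega
      · rw [Function.update_of_ne h]; exact hF.1.2.1 l
    · rw [sum_update_add]; linarith
    · intro l
      rcases eq_or_ne l i with rfl | h
      · rw [Function.update_self]; show u l ≤ u l + 1; omega
      · rw [Function.update_of_ne h]
    · intro h
      have := congrFun h i
      rw [Function.update_self] at this
      omega
  · exact le_antisymm (le_min h1 h2) hge

/-- frontier points are locally stable -/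
lemma memF_stable {u : Fin n → ℤ} (hF : memF q b cap u) : stable q b cap u := by
  have hsum := memF_sum hF
  refine ⟨hF.1, hsum, ?_⟩
  intro i j hj hi
  by_contra hgt
  push_neg at hgt
  have hij : i ≠ j := by
    rintro rfl
    linarith
  set z := move u i j with hz
  have hzsum : ∑ l, z l = mcap q cap := by rw [hz, move_sum hij]; exact hsum
  have hzB : memB q cap z := by
    rw [hz]; exact move_memB hF.1 hij hi hj
  refine hF.2 ⟨z, hzB, Or.inr ?_⟩
  rw [tb_eq hsum, tb_eq hzsum]
  exact smaj_transfer hij tm_move_i (tm_move_j hij)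
    (fun l h1 h2 => tm_move_other h1 h2) hgt

/-- a locally stable point is least-majorized among all feasible points of total `mcap` -/
lemma stable_least {u : Fin n → ℤ} (hst : stable q b cap u) :
    ∀ y : Fin n → ℤ, memB q cap y → ∑ i, y i = mcap q cap →
      maj (Tb b y) (Tb b u) := by
  have key : ∀ N : ℕ, ∀ y : Fin n → ℤ, memB q cap y → ∑ i, y i = mcap q cap →
      ∑ l, (y l - u l).toNat ≤ N → maj (Tb b y) (Tb b u) := by
    intro N
    induction N with
    | zero =>
      intro y hyB hys hN
      have hle : ∀ l, y l ≤ u l := by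
        intro l
        have h0 : (y l - u l).toNat = 0 := by
          have := Finset.sum_eq_zero_iff.mp (Nat.le_zero.mp hN)
          exact this l (Finset.mem_univ l)
        omega
      have : y = u := by
        funext l
        by_contra h
        have hlt : y l < u l := lt_of_le_of_ne (hle l) h
        have hsl : ∑ i, y i < ∑ i, u i :=
          Finset.sum_lt_sum (fun i _ => hle i) ⟨l, Finset.mem_univ l, hlt⟩
        have := hst.2.1
        omega
      rw [this]
      exact maj_refl _
    | succ N IH =>
      intro y hyB hys hN
      by_cases hequ : y = u
      · rw [hequ]; exact maj_refl _
      have hi : ∃ i, u i < y i := by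
        by_contra h
        push_neg at h
        have : y = u := by
          by_contra hne
          have : ∃ l, y l < u l := by
            by_contra h2
            push_neg at h2
            exact hne (funext fun l => le_antisymm (h l) (h2 l))
          obtain ⟨l, hl⟩ := this
          have hsl : ∑ i, y i < ∑ i, u i :=
            Finset.sum_lt_sum (fun i _ => h i) ⟨l, Finset.mem_univ l, hl⟩
          have := hst.2.1
          omega
        exact hequ this
      obtain ⟨i, hiu⟩ := hi
      have hj : ∃ j, y j < u j := by
        by_contra h
        push_neg at h
        have hsl : ∑ l, u l < ∑ l, y l :=
          Finset.sum_lt_sum (fun l _ => h l) ⟨i, Finset.mem_univ i, hiu⟩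
        have := hst.2.1
        omega
      obtain ⟨j, hju⟩ := hj
      have hij : i ≠ j := by rintro rfl; omega
      have hstab := hst.2.2 i j (by linarith [hyB.1 j]) (by linarith [hyB.2.1 i])
      -- y' = y - e_i + e_j
      set y' := move y j i with hy'
      have hy'i : y' i = y i - 1 := by rw [hy', move_apply_j (Ne.symm hij)]
      have hy'j : y' j = y j + 1 := by rw [hy', move_apply_i]
      have hy'other : ∀ l, l ≠ i → l ≠ j → y' l = y l := by
        intro l h1 h2
        rw [hy', move_apply_other h2 h1]
      have hy'sum : ∑ l, y' l = mcap q cap := by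
        rw [hy', move_sum (Ne.symm hij)]; exact hys
      have hy'B : memB q cap y' := by
        refine ⟨?_, ?_, ?_⟩
        · intro l
          rcases eq_or_ne l i with rfl | h1
          · rw [hy'i]; linarith [hst.1.1 l]
          rcases eq_or_ne l j with rfl | h2
          · rw [hy'j]; linarith [hyB.1 l]
          · rw [hy'other l h1 h2]; exact hyB.1 l
        · intro l
          rcases eq_or_ne l i with rfl | h1
          · rw [hy'i]; linarith [hyB.2.1 l]
          rcases eq_or_ne l j with rfl | h2
          · rw [hy'j]; linarith [hst.1.2.1 l]
          · rw [hy'other l h1 h2]; exact hyB.2.1 l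
        · rw [hy'sum, ← hys]; exact hyB.2.2
      have hmeas : ∑ l, (y' l - u l).toNat ≤ N := by
        have hsplit : ∀ v : Fin n → ℤ, ∑ l, (v l - u l).toNat
            = (v i - u i).toNat + ∑ l ∈ Finset.univ.erase i, (v l - u l).toNat := by
          intro v
          rw [Finset.add_sum_erase _ (fun l => (v l - u l).toNat) (Finset.mem_univ i)]
        have h1 : ∑ l ∈ Finset.univ.erase i, (y' l - u l).toNat
            ≤ ∑ l ∈ Finset.univ.erase i, (y l - u l).toNat := by
          apply Finset.sum_le_sum
          intro l hl
          have hli : l ≠ i := (Finset.mem_erase.mp hl).1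
          rcases eq_or_ne l j with rfl | h2
          · rw [hy'j]; omega
          · rw [hy'other l hli h2]
        have h2 : (y' i - u i).toNat + 1 = (y i - u i).toNat := by
          rw [hy'i]; omega
        have := hsplit y'
        have := hsplit y
        omega
      have hmaj1 : maj (Tb b y) (Tb b y') := by
        rw [tb_eq hys, tb_eq hy'sum]
        refine maj_transfer hij ?_ ?_ ?_ ?_
        · simp [Tm, hy'i]; push_cast; ring
        · simp [Tm, hy'j]; push_cast; ring
        · intro l h1 h2; simp [Tm, hy'other l h1 h2]
        · -- Tm y j + 1 ≤ Tm y i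
          simp only [Tm] at hstab ⊢
          have c1 : (u i : ℝ) + 1 ≤ (y i : ℝ) := by exact_mod_cast hiu
          have c2 : (y j : ℝ) + 1 ≤ (u j : ℝ) := by exact_mod_cast hju
          linarith
      exact maj_trans hmaj1 (IH y' hy'B hy'sum hmeas)
  intro y hyB hys
  exact key _ y hyB hys le_rfl

end Vec

section Vec2
variable {n : ℕ} {q : ℕ} {b : Fin n → ℝ} {cap : Fin n → ℤ}

lemma exists_stable (hcap : ∀ i, 0 ≤ cap i) : ∃ u, stable q b cap u := by
  classical
  have hm0 : 0 ≤ mcap q cap :=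
    le_min (Int.ofNat_nonneg q) (Finset.sum_nonneg fun i _ => hcap i)
  set W := (Finset.Icc (0 : Fin n → ℤ) cap).filter
      (fun y => ∑ i, y i ≤ mcap q cap) with hW
  have h0W : (0 : Fin n → ℤ) ∈ W := by
    rw [hW, Finset.mem_filter, Finset.mem_Icc]
    refine ⟨⟨le_refl _, fun i => hcap i⟩, ?_⟩
    simp [hm0]
  obtain ⟨y₀, hy₀W, hymax⟩ :=
    Finset.exists_max_image W (fun y => ∑ i, y i) ⟨0, h0W⟩
  rw [hW, Finset.mem_filter, Finset.mem_Icc] at hy₀W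
  have hy₀sum : ∑ i, y₀ i = mcap q cap := by
    rcases lt_or_ge (∑ i, y₀ i) (mcap q cap) with hlt | hge
    · exfalso
      have hc : ∑ i, y₀ i < ∑ i, cap i := lt_of_lt_of_le hlt (min_le_right _ _)
      have : ∃ i, y₀ i < cap i := by
        by_contra h
        push_neg at h
        exact absurd (Finset.sum_le_sum (fun i _ => h i)) (not_le.mpr hc)
      obtain ⟨i, hi⟩ := this
      have hy₀0 : ∀ l, 0 ≤ y₀ l := fun l => (Pi.le_def.mp hy₀W.1.1) l
      have hy₀c : ∀ l, y₀ l ≤ cap l := fun l => (Pi.le_def.mp hy₀W.1.2) l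
      have hmem : Function.update y₀ i (y₀ i + 1) ∈ W := by
        rw [hW, Finset.mem_filter, Finset.mem_Icc]
        refine ⟨⟨Pi.le_def.mpr fun l => ?_, Pi.le_def.mpr fun l => ?_⟩, ?_⟩
        · show (0 : ℤ) ≤ _
          rcases eq_or_ne l i with rfl | h
          · rw [Function.update_self]; have := hy₀0 l; omega
          · rw [Function.update_of_ne h]; exact hy₀0 l
        · rcases eq_or_ne l i with rfl | h
          · rw [Function.update_self]; have := hy₀c l; omega
          · rw [Function.update_of_ne h]; exact hy₀c l
        · rw [sum_update_add]; omega
      have := hymax _ hmem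
      rw [sum_update_add] at this
      omega
    · exact le_antisymm hy₀W.2 hge
  set Y := (Finset.Icc (0 : Fin n → ℤ) cap).filter
      (fun y => ∑ i, y i = mcap q cap) with hY
  have hy₀Y : y₀ ∈ Y := by
    rw [hY, Finset.mem_filter, Finset.mem_Icc]
    exact ⟨⟨hy₀W.1.1, hy₀W.1.2⟩, hy₀sum⟩
  obtain ⟨u, huY, humin⟩ :=
    Finset.exists_min_image Y (fun y => ∑ l, (Tm q b cap y l)^2) ⟨y₀, hy₀Y⟩
  rw [hY, Finset.mem_filter, Finset.mem_Icc] at huY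
  have hu0 : ∀ i, 0 ≤ u i := fun i => (Pi.le_def.mp huY.1.1) i
  have hucap : ∀ i, u i ≤ cap i := fun i => (Pi.le_def.mp huY.1.2) i
  have husum : ∑ i, u i = mcap q cap := huY.2
  refine ⟨u, ⟨⟨hu0, hucap, by rw [husum]; exact min_le_left _ _⟩, husum, ?_⟩⟩
  intro i j hj hi
  by_contra hgt
  push_neg at hgt
  have hij : i ≠ j := by rintro rfl; linarith
  set z := move u i j with hz
  have hzsum : ∑ l, z l = mcap q cap := by rw [hz, move_sum hij]; exact husum
  have hzB : memB q cap z :=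
    move_memB ⟨hu0, hucap, by rw [husum]; exact min_le_left _ _⟩ hij hi hj
  have hzY : z ∈ Y := by
    rw [hY, Finset.mem_filter, Finset.mem_Icc]
    exact ⟨⟨Pi.le_def.mpr fun l => hzB.1 l, Pi.le_def.mpr fun l => hzB.2.1 l⟩, hzsum⟩
  have hlt : ∑ l, (Tm q b cap z l)^2 < ∑ l, (Tm q b cap u l)^2 := by
    rw [sum_split_two hij Finset.univ (Finset.mem_univ i) (Finset.mem_univ j)
      (fun l => (Tm q b cap z l)^2),
      sum_split_two hij Finset.univ (Finset.mem_univ i) (Finset.mem_univ j)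
      (fun l => (Tm q b cap u l)^2)]
    have hrest : ∑ l ∈ (Finset.univ.erase i).erase j, (Tm q b cap z l)^2
        = ∑ l ∈ (Finset.univ.erase i).erase j, (Tm q b cap u l)^2 := by
      apply Finset.sum_congr rfl
      intro l hl
      rw [hz, tm_move_other (Finset.mem_erase.mp (Finset.mem_erase.mp hl).2).1
        (Finset.mem_erase.mp hl).1]
    rw [hrest, hz, tm_move_i, tm_move_j hij]
    nlinarith [hgt]
  exact absurd (humin z hzY) (not_le.mpr hlt)

lemma stable_memF (hb : ∑ i, b i = 0) {u : Fin n → ℤ} (hst : stable q b cap u) :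
    memF q b cap u := by
  refine ⟨hst.1, ?_⟩
  rintro ⟨z, hzB, hcase | hsmaj⟩
  · have hlt : ∑ i, u i < ∑ i, z i := by
      apply Finset.sum_lt_sum (fun i _ => hcase.1 i)
      by_contra h
      push_neg at h
      exact hcase.2 (funext fun i => le_antisymm (hcase.1 i) (h i (Finset.mem_univ i)))
    have h1 : ∑ i, z i ≤ (q : ℤ) := hzB.2.2
    have h2 : ∑ i, z i ≤ ∑ i, cap i := Finset.sum_le_sum (fun i _ => hzB.2.1 i)
    have := hst.2.1
    have : ∑ i, z i ≤ mcap q cap := le_min h1 h2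
    omega
  · have hzsum : ∑ i, z i = mcap q cap := by
      have := maj_sum_int hb hsmaj.1
      have := hst.2.1
      omega
    exact hsmaj.2 (stable_least hst z hzB hzsum)

lemma memF_nonempty (hb : ∑ i, b i = 0) (hcap : ∀ i, 0 ≤ cap i) :
    ∃ u, memF q b cap u := by
  obtain ⟨u, hu⟩ := exists_stable (q := q) (b := b) hcap
  exact ⟨u, stable_memF hb hu⟩

lemma memF_of_equiv {z z' : Fin n → ℤ} (hzF : memF q b cap z)
    (hz'B : memB q cap z') (hz'sum : ∑ i, z' i = mcap q cap)
    (h2 : maj (Tb b z) (Tb b z')) : memF q b cap z' := by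
  refine ⟨hz'B, ?_⟩
  rintro ⟨w, hwB, hcase | hsmaj⟩
  · have hlt : ∑ i, z' i < ∑ i, w i := by
      apply Finset.sum_lt_sum (fun i _ => hcase.1 i)
      by_contra h
      push_neg at h
      exact hcase.2 (funext fun i => le_antisymm (hcase.1 i) (h i (Finset.mem_univ i)))
    have h1 : ∑ i, w i ≤ (q : ℤ) := hwB.2.2
    have hcc : ∑ i, w i ≤ ∑ i, cap i := Finset.sum_le_sum (fun i _ => hwB.2.1 i)
    have : ∑ i, w i ≤ mcap q cap := le_min h1 hcc
    omega
  · refine hzF.2 ⟨w, hwB, Or.inr ⟨maj_trans h2 hsmaj.1, ?_⟩⟩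
    intro h
    exact hsmaj.2 (maj_trans h h2)

/-- Exchange property of the frontier. -/
lemma exchange (hb : ∑ i, b i = 0) {u v x y : Fin n → ℤ}
    (hxF : memF q b cap x) (hyF : memF q b cap y)
    (hu0 : ∀ i, 0 ≤ u i) (hux : ∀ i, u i ≤ x i) (hvy : ∀ i, v i ≤ y i)
    (hsum : ∑ i, u i < ∑ i, v i) :
    ∃ (i : Fin n) (z : Fin n → ℤ), memF q b cap z ∧ u i < v i ∧
      ∀ l, u l + (if l = i then 1 else 0) ≤ z l := by
  have hysum : ∑ i, y i = mcap q cap := memF_sum hyF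
  have hvsum : ∑ i, v i ≤ mcap q cap := by
    have := Finset.sum_le_sum (fun i (_ : i ∈ Finset.univ) => hvy i)
    omega
  have histar : ∀ z : Fin n → ℤ, ∃ i, u i < v i := by
    intro _
    by_contra h
    push_neg at h
    exact absurd (Finset.sum_le_sum (fun i (_ : i ∈ Finset.univ) => h i)) (not_le.mpr hsum)
  have main : ∀ N : ℕ, ∀ z : Fin n → ℤ, memF q b cap z → (∀ l, u l ≤ z l) →
      (∑ l, (z l - y l).toNat ≤ N) →
      ∃ (i : Fin n) (z' : Fin n → ℤ), memF q b cap z' ∧ u i < v i ∧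
        ∀ l, u l + (if l = i then 1 else 0) ≤ z' l := by
    intro N
    induction N with
    | zero =>
      intro z hzF huz hN
      have hzsum : ∑ i, z i = mcap q cap := memF_sum hzF
      have hzy : ∀ l, z l ≤ y l := by
        intro l
        have h0 : (z l - y l).toNat = 0 :=
          Finset.sum_eq_zero_iff.mp (Nat.le_zero.mp hN) l (Finset.mem_univ l)
        omega
      have hzey : z = y := by
        funext l
        by_contra h
        have hlt : z l < y l := lt_of_le_of_ne (hzy l) h
        have : ∑ i, z i < ∑ i, y i :=
          Finset.sum_lt_sum (fun i _ => hzy i) ⟨l, Finset.mem_univ l, hlt⟩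
        omega
      obtain ⟨i, hi⟩ := histar z
      refine ⟨i, z, hzF, hi, fun l => ?_⟩
      rcases eq_or_ne l i with rfl | h
      · simp only [if_pos rfl]
        have := hvy l
        rw [hzey]
        omega
      · simp only [if_neg h]
        have := huz l
        omega
    | succ N IH =>
      intro z hzF huz hN
      have hzsum : ∑ i, z i = mcap q cap := memF_sum hzF
      by_cases hdone : ∃ i, u i < v i ∧ u i < z i
      · obtain ⟨i, h1, h2⟩ := hdone
        refine ⟨i, z, hzF, h1, fun l => ?_⟩
        rcases eq_or_ne l i with rfl | h
        · simp only [if_pos rfl]; omega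
        · simp only [if_neg h]; have := huz l; omega
      push_neg at hdone
      have H : ∀ i, u i < v i → z i = u i := by
        intro i h
        exact le_antisymm (by have := hdone i h; omega) (huz i)
      -- find j with y j < z j and u j < z j
      have hjex : ∃ j, y j < z j ∧ u j < z j := by
        by_contra hcon
        push_neg at hcon
        have Hz : ∀ j, y j < z j → z j = u j := by
          intro j hjz
          exact le_antisymm (by have := hcon j hjz; omega) (huz j)
        have per : ∀ l, (v l - u l).toNat + (z l - y l).toNat
            ≤ (y l - z l).toNat + (u l - v l).toNat := by
          intro l
          rcases lt_or_ge (u l) (v l) with h | h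
          · have hzl := H l h
            have h3 := hvy l
            rcases lt_or_ge (y l) (z l) with g | g
            · have := Hz l g; omega
            · omega
          · rcases lt_or_ge (y l) (z l) with g | g
            · have hzl := Hz l g
              have h3 := hvy l
              omega
            · omega
        have hsumper := Finset.sum_le_sum (fun l (_ : l ∈ Finset.univ) => per l)
        rw [Finset.sum_add_distrib, Finset.sum_add_distrib] at hsumper
        have idA : ∀ p r : Fin n → ℤ,
            (∑ l, (p l - r l).toNat : ℤ) - (∑ l, (r l - p l).toNat : ℤ)
              = ∑ l, p l - ∑ l, r l := by
          intro p r
          push_cast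
          rw [← Finset.sum_sub_distrib, ← Finset.sum_sub_distrib]
          apply Finset.sum_congr rfl
          intro l _
          omega
        have id1 := idA v u
        have id2 := idA z y
        have hc1 : ((∑ l, (v l - u l).toNat + ∑ l, (z l - y l).toNat : ℕ) : ℤ)
            ≤ ((∑ l, (y l - z l).toNat + ∑ l, (u l - v l).toNat : ℕ) : ℤ) := by
          exact_mod_cast hsumper
        push_cast at hc1
        omega
      obtain ⟨j, hjy, hjz⟩ := hjex
      obtain ⟨i, hiuv⟩ := histar z
      have hziu : z i = u i := H i hiuv
      have hij : i ≠ j := by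
        rintro rfl
        omega
      have hziy : z i < y i := by
        have := hvy i
        omega
      have hstz := memF_stable hzF
      have hsty := memF_stable hyF
      -- stability of z at (i, j):  Tm z j ≤ Tm z i + 1
      have hs1 : Tm q b cap z j ≤ Tm q b cap z i + 1 := by
        apply hstz.2.2 i j
        · have := hyF.1.1 j; omega
        · have := hyF.1.2.1 i; omega
      -- stability of y at (j, i):  Tm y i ≤ Tm y j + 1
      have hs2 : Tm q b cap y i ≤ Tm q b cap y j + 1 := by
        apply hsty.2.2 j i
        · have := hu0 i; omega
        · have := hzF.1.2.1 j; omega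
      have hgap : Tm q b cap z j = Tm q b cap z i + 1 := by
        have c1 : (z i : ℝ) + 1 ≤ (y i : ℝ) := by exact_mod_cast hziy
        have c2 : (y j : ℝ) + 1 ≤ (z j : ℝ) := by exact_mod_cast hjy
        simp only [Tm] at hs1 hs2 ⊢
        linarith
      set z' := move z i j with hz'
      have hz'sum : ∑ l, z' l = mcap q cap := by rw [hz', move_sum hij]; exact hzsum
      have hz'B : memB q cap z' := by
        rw [hz']
        apply move_memB hzF.1 hij
        · have := hyF.1.2.1 i; omega
        · have := hyF.1.1 j; omega
      have hmajzz' : maj (Tb b z) (Tb b z') := by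
        rw [tb_eq hzsum, tb_eq hz'sum]
        refine maj_swap hij ?_ ?_ ?_
        · rw [hz', tm_move_i, hgap]
        · rw [hz', tm_move_j hij, hgap]; ring
        · intro l h1 h2; rw [hz', tm_move_other h1 h2]
      have hz'F : memF q b cap z' := memF_of_equiv hzF hz'B hz'sum hmajzz'
      have huz' : ∀ l, u l ≤ z' l := by
        intro l
        rcases eq_or_ne l i with rfl | h1
        · rw [hz', move_apply_i]; have := huz l; omega
        rcases eq_or_ne l j with rfl | h2
        · rw [hz', move_apply_j hij]; omega
        · rw [hz', move_apply_other h1 h2]; exact huz l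
      have hmeas : ∑ l, (z' l - y l).toNat ≤ N := by
        have hsplit : ∀ w : Fin n → ℤ, ∑ l, (w l - y l).toNat
            = (w j - y j).toNat + ∑ l ∈ Finset.univ.erase j, (w l - y l).toNat := by
          intro w
          rw [Finset.add_sum_erase _ (fun l => (w l - y l).toNat) (Finset.mem_univ j)]
        have h1 : ∑ l ∈ Finset.univ.erase j, (z' l - y l).toNat
            ≤ ∑ l ∈ Finset.univ.erase j, (z l - y l).toNat := by
          apply Finset.sum_le_sum
          intro l hl
          have hlj : l ≠ j := (Finset.mem_erase.mp hl).1
          rcases eq_or_ne l i with rfl | h2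
          · rw [hz', move_apply_i]; omega
          · rw [hz', move_apply_other h2 hlj]
        have h2 : (z' j - y j).toNat + 1 = (z j - y j).toNat := by
          rw [hz', move_apply_j hij]; omega
        have := hsplit z'
        have := hsplit z
        omega
      exact IH z' hz'F huz' hmeas
  exact main _ x hxF hux le_rfl

end Vec2

section XiL
variable {σ : Type} [DecidableEq σ] {n : ℕ} (typ : σ → Fin n)

lemma xi_nonneg (R : Finset σ) (i : Fin n) : 0 ≤ xi typ R i :=
  Int.ofNat_nonneg _

lemma xi_mono {R R' : Finset σ} (h : R ⊆ R') (i : Fin n) :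
    xi typ R i ≤ xi typ R' i := by
  unfold xi
  exact_mod_cast Finset.card_le_card (Finset.filter_subset_filter _ h)

lemma xi_empty (i : Fin n) : xi typ (∅ : Finset σ) i = 0 := by simp [xi]

lemma sum_xi (R : Finset σ) : ∑ i, xi typ R i = (R.card : ℤ) := by
  unfold xi
  rw [← Nat.cast_sum]
  congr 1
  exact (Finset.card_eq_sum_card_fiberwise (fun s _ => Finset.mem_univ (typ s))).symm

lemma xi_insert {s : σ} {R : Finset σ} (hs : s ∉ R) (i : Fin n) :
    xi typ (insert s R) i = xi typ R i + (if typ s = i then 1 else 0) := by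
  unfold xi
  rw [Finset.filter_insert]
  split_ifs with h
  · rw [Finset.card_insert_of_notMem (fun hc => hs (Finset.mem_of_mem_filter s hc))]
    push_cast; ring
  · ring

lemma exists_type_mem {V U : Finset σ} {i : Fin n}
    (h : xi typ U i < xi typ V i) : ∃ s ∈ V, s ∉ U ∧ typ s = i := by
  by_contra hc
  push_neg at hc
  have hsub : V.filter (fun s => typ s = i) ⊆ U.filter (fun s => typ s = i) := by
    intro s hs
    rw [Finset.mem_filter] at hs ⊢
    refine ⟨?_, hs.2⟩
    by_contra hnU
    exact (hc s hs.1 hnU) hs.2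
  have := Finset.card_le_card hsub
  unfold xi at h
  omega
end XiL


section Greedy
variable {σ : Type} [DecidableEq σ] {n : ℕ} (q : ℕ) (b : Fin n → ℝ)
  (typ : σ → Fin n) (S : Finset σ) (prio : σ → ℕ)

lemma schur_master :
    ∀ (l : List σ) (acc : Finset σ),
      l.Pairwise (fun s t => prio s < prio t) →
      (∀ c ∈ acc, ∀ s ∈ l, prio c < prio s) →
      acc ⊆ schurChoice q b typ S l acc ∧
      (∀ s ∈ schurChoice q b typ S l acc, s ∈ acc ∨ s ∈ l) ∧
      (∀ s ∈ l, s ∉ schurChoice q b typ S l acc →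
        ∃ a : Finset σ, acc ⊆ a ∧ a ⊆ schurChoice q b typ S l acc ∧
          (∀ c ∈ a, prio c < prio s) ∧
          ¬∃ x : Fin n → ℤ, memF q b (xi typ S) x ∧
            ∀ i, xi typ (insert s a) i ≤ x i) ∧
      ((∃ x, memF q b (xi typ S) x ∧ ∀ i, xi typ acc i ≤ x i) →
        ∃ x, memF q b (xi typ S) x ∧
          ∀ i, xi typ (schurChoice q b typ S l acc) i ≤ x i) := by
  intro l
  induction l with
  | nil =>
    intro acc _ _
    refine ⟨by rw [schurChoice], ?_, ?_, ?_⟩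
    · rw [schurChoice]; exact fun s hs => Or.inl hs
    · intro s hs; exact absurd hs (List.not_mem_nil)
    · rw [schurChoice]; exact id
  | cons s rest IH =>
    intro acc hsort hacc
    have hsort' : rest.Pairwise (fun s t => prio s < prio t) := hsort.of_cons
    have hs_rest : ∀ t ∈ rest, prio s < prio t := fun t ht => List.rel_of_pairwise_cons hsort ht
    rw [schurChoice]
    split_ifs with hcond
    · -- accept s
      have hacc' : ∀ c ∈ insert s acc, ∀ t ∈ rest, prio c < prio t := by
        intro c hc t ht
        rcases Finset.mem_insert.mp hc with rfl | hc'
        · exact hs_rest t ht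
        · exact hacc c hc' t (List.mem_cons_of_mem _ ht)
      obtain ⟨h1, h2, h3, h4⟩ := IH (insert s acc) hsort' hacc'
      refine ⟨fun c hc => h1 (Finset.mem_insert_of_mem hc), ?_, ?_, fun _ => h4 hcond⟩
      · intro t ht
        rcases h2 t ht with ht' | ht'
        · rcases Finset.mem_insert.mp ht' with rfl | h
          · exact Or.inr (List.mem_cons_self)
          · exact Or.inl h
        · exact Or.inr (List.mem_cons_of_mem _ ht')
      · intro t ht htR
        rcases List.mem_cons.mp ht with rfl | ht'
        · exact absurd (h1 (Finset.mem_insert_self t acc)) htR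
        · obtain ⟨a, ha1, ha2, ha3, ha4⟩ := h3 t ht' htR
          exact ⟨a, fun c hc => ha1 (Finset.mem_insert_of_mem hc), ha2, ha3, ha4⟩
    · -- reject s
      have hacc' : ∀ c ∈ acc, ∀ t ∈ rest, prio c < prio t := by
        intro c hc t ht
        exact hacc c hc t (List.mem_cons_of_mem _ ht)
      obtain ⟨h1, h2, h3, h4⟩ := IH acc hsort' hacc'
      refine ⟨h1, ?_, ?_, h4⟩
      · intro t ht
        rcases h2 t ht with ht' | ht'
        · exact Or.inl ht'
        · exact Or.inr (List.mem_cons_of_mem _ ht')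
      · intro t ht htR
        rcases List.mem_cons.mp ht with rfl | ht'
        · refine ⟨acc, Finset.Subset.refl _, h1, ?_, hcond⟩
          exact fun c hc => hacc c hc t (List.mem_cons_self)
        · exact h3 t ht' htR

end Greedy

section SortCount

lemma count_ge (D : Finset ℕ) {k : ℕ} (hk : k < D.card) :
    k + 1 ≤ (D.filter (fun v => v ≤ (Finset.sort D (·≤·)).getD k 0)).card := by
  set L := Finset.sort D (·≤·) with hL
  have hlen : L.length = D.card := Finset.length_sort _
  have hkL : k < L.length := by omega
  have hsorted : L.Pairwise (·≤·) := Finset.pairwise_sort _ _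
  have hnodup : L.Nodup := Finset.sort_nodup _ _
  have hcard : (Finset.range (k+1)).card
      ≤ (D.filter (fun v => v ≤ L.getD k 0)).card := by
    apply Finset.card_le_card_of_injOn (fun idx => L.getD idx 0)
    · intro idx hidx
      simp only [Finset.mem_coe] at hidx ⊢
      rw [Finset.mem_range] at hidx
      have hidxL : idx < L.length := by omega
      rw [Finset.mem_filter]
      constructor
      · rw [List.getD_eq_getElem L 0 hidxL, ← Finset.mem_sort (α := ℕ) (·≤·), ← hL]
        exact List.getElem_mem hidxL
      · rw [List.getD_eq_getElem L 0 hkL, List.getD_eq_getElem L 0 hidxL]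
        rcases Nat.lt_or_ge idx k with hlt | hge
        · exact List.pairwise_iff_getElem.mp hsorted idx k hidxL hkL hlt
        · have : idx = k := by omega
          subst this
          exact le_refl _
    · intro a ha b hb hab
      simp only [Finset.coe_range, Set.mem_Iio] at ha hb
      have haL : a < L.length := by omega
      have hbL : b < L.length := by omega
      have hab' : L.getD a 0 = L.getD b 0 := hab
      rw [List.getD_eq_getElem L 0 haL, List.getD_eq_getElem L 0 hbL] at hab'
      exact hnodup.getElem_inj_iff.mp hab'
  rw [Finset.card_range] at hcard
  exact hcard

lemma count_le (D : Finset ℕ) {k : ℕ} (hk : k < (Finset.sort D (·≤·)).length) {p : ℕ}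
    (hp : p < (Finset.sort D (·≤·)).getD k 0) :
    (D.filter (fun v => v ≤ p)).card ≤ k := by
  set L := Finset.sort D (·≤·) with hL
  have hsorted : L.Pairwise (·≤·) := Finset.pairwise_sort _ _
  have hsub : D.filter (fun v => v ≤ p) ⊆ (L.take k).toFinset := by
    intro v hv
    rw [Finset.mem_filter] at hv
    have hvL : v ∈ L := by rw [hL, Finset.mem_sort]; exact hv.1
    obtain ⟨idx, hidxL, hval⟩ := List.mem_iff_getElem.mp hvL
    have hidxk : idx < k := by
      by_contra hge
      push_neg at hge
      have hkv : L.getD k 0 ≤ v := by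
        rw [List.getD_eq_getElem L 0 hk]
        rcases Nat.lt_or_ge k idx with hlt | hge2
        · rw [← hval]
          exact List.pairwise_iff_getElem.mp hsorted k idx hk hidxL hlt
        · have : idx = k := by omega
          subst this
          rw [hval]
      omega
    rw [List.mem_toFinset]
    have hidxtake : idx < (L.take k).length := by
      rw [List.length_take]
      omega
    have : (L.take k)[idx] = v := by rw [List.getElem_take]; exact hval
    rw [← this]
    exact List.getElem_mem hidxtake
  calc (D.filter (fun v => v ≤ p)).card ≤ (L.take k).toFinset.card :=
        Finset.card_le_card hsub
    _ ≤ (L.take k).length := List.toFinset_card_le _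
    _ ≤ k := by rw [List.length_take]; omega

end SortCount


section Frontier
variable {σ : Type} [DecidableEq σ] {n : ℕ} (q : ℕ) (b : Fin n → ℝ)
  (typ : σ → Fin n) (S : Finset σ) (prio : σ → ℕ)

lemma schur_frontier (hb : ∑ i, b i = 0) (l : List σ) (hl : ∀ s, s ∈ l ↔ s ∈ S)
    (hsort : l.Pairwise fun s t => prio s < prio t) :
    (schurChoice q b typ S l ∅) ⊆ S ∧
      memF q b (xi typ S) (xi typ (schurChoice q b typ S l ∅)) := by
  obtain ⟨h1, h2, h3, h4⟩ := schur_master q b typ S prio l ∅ hsort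
    (fun c hc => absurd hc (Finset.notMem_empty c))
  have hCS : schurChoice q b typ S l ∅ ⊆ S := by
    intro s hs
    rcases h2 s hs with h | h
    · exact absurd h (Finset.notMem_empty s)
    · exact (hl s).mp h
  obtain ⟨x₀, hx₀⟩ := memF_nonempty (q := q) hb (fun i => xi_nonneg typ S i)
  obtain ⟨x, hxF, hCx⟩ := h4 ⟨x₀, hx₀, fun i => by rw [xi_empty]; exact hx₀.1.1 i⟩
  have hxeq : xi typ (schurChoice q b typ S l ∅) = x := by
    by_contra hne
    have hex : ∃ i, xi typ (schurChoice q b typ S l ∅) i < x i := by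
      by_contra hforall
      push_neg at hforall
      exact hne (funext fun i => le_antisymm (hCx i) (hforall i))
    obtain ⟨i, hi⟩ := hex
    have hxc : x i ≤ xi typ S i := hxF.1.2.1 i
    obtain ⟨s, hsS, hsC, hstyp⟩ := exists_type_mem typ (lt_of_lt_of_le hi hxc)
    obtain ⟨a, _, haC, _, hnot⟩ := h3 s ((hl s).mpr hsS) hsC
    apply hnot
    refine ⟨x, hxF, fun i' => ?_⟩
    have hsa : s ∉ a := fun h => hsC (haC h)
    rw [xi_insert typ hsa]
    have hmono := xi_mono typ haC i'
    by_cases hii : typ s = i'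
    · have hii' : i' = i := by rw [← hii]; exact hstyp
      rw [if_pos hii, hii']
      have := xi_mono typ haC i
      omega
    · rw [if_neg hii]
      have := hCx i'
      omega
  rw [hxeq]
  exact ⟨hCS, hxF⟩

end Frontier

/-- Comparison of the `b`-targeting Schur choice rule with any other choice
rule: the Schur rule admits more students, or a strictly more `b`-diverse
student body, or a priority-dominating one. -/
theorem stmt17 {σ : Type} [DecidableEq σ] {n : ℕ} (q : ℕ) (hq : 0 < q)
    (b : Fin n → ℝ) (hb : ∑ i, b i = 0) (typ : σ → Fin n)
    (prio : σ → ℕ) (hinj : Function.Injective prio)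
    (S : Finset σ) (l : List σ) (hl : ∀ s, s ∈ l ↔ s ∈ S)
    (hsort : l.Pairwise fun s t => prio s < prio t)
    (C' : Finset σ → Finset σ) (hC'sub : ∀ A, C' A ⊆ A)
    (hC'card : ∀ A, (C' A).card ≤ q)
    (hne : schurChoice q b typ S l ∅ ≠ C' S) :
    (C' S).card < (schurChoice q b typ S l ∅).card ∨
    smaj (Tb b (xi typ (C' S))) (Tb b (xi typ (schurChoice q b typ S l ∅))) ∨
    pdom prio (schurChoice q b typ S l ∅) (C' S) := by
  classical
  obtain ⟨hCS, hCF⟩ := schur_frontier q b typ S prio hb l hl hsort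
  obtain ⟨hm1, hm2, h3, hm4⟩ := schur_master q b typ S prio l ∅ hsort
    (fun c hc => absurd hc (Finset.notMem_empty c))
  set C := schurChoice q b typ S l ∅ with hCdef
  set A' := C' S with hA'def
  have hA'S : A' ⊆ S := hC'sub S
  have hA'B : memB q (xi typ S) (xi typ A') :=
    ⟨fun i => xi_nonneg typ A' i, fun i => xi_mono typ hA'S i,
      by rw [sum_xi]; exact_mod_cast hC'card S⟩
  have hsumC : ∑ i, xi typ C i = mcap q (xi typ S) := memF_sum hCF
  have hcardC : (C.card : ℤ) = mcap q (xi typ S) := by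
    rw [← sum_xi typ C]; exact hsumC
  have hsumA' : ∑ i, xi typ A' i ≤ mcap q (xi typ S) :=
    le_min hA'B.2.2 (Finset.sum_le_sum fun i _ => hA'B.2.1 i)
  have hcardle : (A'.card : ℤ) ≤ (C.card : ℤ) := by
    rw [hcardC, ← sum_xi typ A']; exact hsumA'
  rcases lt_or_eq_of_le hcardle with hlt | heq
  · left
    exact_mod_cast hlt
  · have hsumA'eq : ∑ i, xi typ A' i = mcap q (xi typ S) := by
      rw [sum_xi, heq, hcardC]
    have hstab := memF_stable hCF
    have hmaj := stable_least hstab (xi typ A') hA'B hsumA'eq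
    by_cases hback : maj (Tb b (xi typ C)) (Tb b (xi typ A'))
    · right; right
      have hA'F : memF q b (xi typ S) (xi typ A') :=
        memF_of_equiv hCF hA'B hsumA'eq hback
      refine ⟨by exact_mod_cast hcardle, ?_⟩
      intro k hk
      have hcount : ∀ p : ℕ, (A'.filter (fun c => prio c ≤ p)).card
          ≤ (C.filter (fun c => prio c ≤ p)).card := by
        intro p
        by_contra hltc
        push_neg at hltc
        set U := C.filter (fun c => prio c ≤ p) with hU
        set V := A'.filter (fun c => prio c ≤ p) with hV
        have hUV : ∑ i, xi typ U i < ∑ i, xi typ V i := by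
          rw [sum_xi, sum_xi]; exact_mod_cast hltc
        obtain ⟨i, z, hzF, hiuv, hz⟩ := exchange hb hCF hA'F
          (fun i => xi_nonneg typ U i)
          (fun i => xi_mono typ (Finset.filter_subset _ _) i)
          (fun i => xi_mono typ (Finset.filter_subset _ _) i) hUV
        obtain ⟨s, hsV, hsU, hstyp⟩ := exists_type_mem typ hiuv
        have hsmem := Finset.mem_filter.mp hsV
        have hsp : prio s ≤ p := hsmem.2
        have hsS : s ∈ S := hA'S hsmem.1
        have hsC : s ∉ C := fun hsC => hsU (Finset.mem_filter.mpr ⟨hsC, hsp⟩)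
        obtain ⟨a, _, haC, hapr, hnot⟩ := h3 s ((hl s).mpr hsS) hsC
        apply hnot
        refine ⟨z, hzF, fun i' => ?_⟩
        have hsa : s ∉ a := fun h => hsC (haC h)
        rw [xi_insert typ hsa]
        have haU : a ⊆ U := fun c hc =>
          Finset.mem_filter.mpr ⟨haC hc, le_trans (le_of_lt (hapr c hc)) hsp⟩
        by_cases hii : typ s = i'
        · have hii' : i' = i := by rw [← hii]; exact hstyp
          rw [if_pos hii, hii']
          have h8 := hz i
          rw [if_pos rfl] at h8
          have := xi_mono typ haU i
          omega
        · rw [if_neg hii]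
          have h8 := hz i'
          have h9 : xi typ U i' ≤ z i' := by
            rcases eq_or_ne i' i with h | h
            · rw [if_pos h] at h8; omega
            · rw [if_neg h] at h8; omega
          have := xi_mono typ haU i'
          omega
      set p := (Finset.sort (A'.image prio) (· ≤ ·)).getD k 0 with hp
      have himg : ∀ (D : Finset σ) (pp : ℕ),
          ((D.image prio).filter (fun v => v ≤ pp)).card
            = (D.filter (fun c => prio c ≤ pp)).card := by
        intro D pp
        rw [Finset.filter_image]
        exact Finset.card_image_of_injective _ hinj
      have hkA : k < (A'.image prio).card := by
        rw [Finset.card_image_of_injective _ hinj]; exact hk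
      have t1 : k + 1 ≤ (A'.filter (fun c => prio c ≤ p)).card := by
        have h0 := count_ge (A'.image prio) hkA
        rw [himg] at h0
        exact h0
      have t2 : k + 1 ≤ (C.filter (fun c => prio c ≤ p)).card :=
        le_trans t1 (hcount p)
      by_contra hgt
      push_neg at hgt
      have hkC : k < (Finset.sort (C.image prio) (· ≤ ·)).length := by
        rw [Finset.length_sort, Finset.card_image_of_injective _ hinj]
        have : A'.card ≤ C.card := by exact_mod_cast hcardle
        omega
      have h0 := count_le (C.image prio) hkC hgt
      rw [himg] at h0
      omega
    · right; left
      exact ⟨hmaj, hback⟩
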